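/- For any positive function f in H^2 of the one-dimensional torus (f of class C^2 suffices), the inequality ∫_T |∂_x (f^{1/2})|^4 dx ≤ (9/16) ∫_T (∂_xx f)^2 dx holds. -/

import Mathlib

open MeasureTheory

/-- For any positive C² periodic function `f` on the one-dimensional torus
(represented by 1-periodic functions on `ℝ`, with integrals over `[0,1]`),
`∫ |∂ₓ (f^{1/2})|⁴ ≤ (9/16) ∫ (∂ₓₓ f)²`. -/
theorem optimal_functional_inequality (f : ℝ → ℝ)
    (hper : Function.Periodic f 1) (hpos : ∀ x, 0 < f x)
    (hf : ContDiff ℝ 2 f) :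
    (∫ x in (0:ℝ)..1, (deriv (fun y => Real.sqrt (f y)) x) ^ 4)
      ≤ (9/16) * ∫ x in (0:ℝ)..1, (deriv (deriv f) x) ^ 2 := by
  set g := deriv f with hgdef
  set h := deriv g with hhdef
  have hfd : Differentiable ℝ f := hf.differentiable (by norm_num)
  have hg1 : ContDiff ℝ 1 g := by
    have h2 : (2 : WithTop ℕ∞) = 1 + 1 := by norm_num
    exact (contDiff_succ_iff_deriv.mp (h2 ▸ hf)).2.2
  have hgd : Differentiable ℝ g := hg1.differentiable one_ne_zero
  have hfc : Continuous f := hfd.continuous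
  have hgc : Continuous g := hgd.continuous
  have hhc : Continuous h := hg1.continuous_deriv le_rfl
  have hfne : ∀ x, f x ≠ 0 := fun x => (hpos x).ne'
  -- periodicity of g
  have hgper : ∀ x : ℝ, g (x + 1) = g x := by
    intro x
    have : (fun y => f (y + 1)) = f := funext fun y => hper y
    calc g (x + 1) = deriv (fun y => f (y + 1)) x := (deriv_comp_add_const ..).symm
      _ = g x := by rw [this]
  -- the derivative of g^3 / f
  have hF : ∀ x, HasDerivAt (fun y => (g y) ^ 3 / f y)
      (3 * (g x) ^ 2 * h x / f x - (g x) ^ 4 / (f x) ^ 2) x := by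
    intro x
    have h1 : HasDerivAt g (h x) x := (hgd x).hasDerivAt
    have h2 : HasDerivAt f (g x) x := (hfd x).hasDerivAt
    have h3 : HasDerivAt (fun y => (g y) ^ 3) (3 * (g x) ^ 2 * h x) x := by
      have := h1.pow 3
      norm_num at this
      exact this
    have h4 : HasDerivAt (fun y => (g y) ^ 3 / f y) _ x := h3.div h2 (hfne x)
    convert h4 using 1
    beta_reduce
    rw [div_sub_div _ _ (hfne x) (pow_ne_zero 2 (hfne x)),
      div_eq_div_iff (mul_ne_zero (hfne x) (pow_ne_zero 2 (hfne x))) (pow_ne_zero 2 (hfne x))]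
    ring
  have hcont1 : Continuous fun x => 3 * (g x) ^ 2 * h x / f x :=
    ((continuous_const.mul (hgc.pow 2)).mul hhc).div hfc hfne
  have hcont2 : Continuous fun x => (g x) ^ 4 / (f x) ^ 2 :=
    (hgc.pow 4).div (hfc.pow 2) fun x => pow_ne_zero 2 (hfne x)
  have hint1 : IntervalIntegrable (fun x => 3 * (g x) ^ 2 * h x / f x) volume 0 1 :=
    hcont1.intervalIntegrable 0 1
  have hint2 : IntervalIntegrable (fun x => (g x) ^ 4 / (f x) ^ 2) volume 0 1 :=
    hcont2.intervalIntegrable 0 1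
  have hintH : IntervalIntegrable (fun x => (h x) ^ 2) volume 0 1 :=
    (hhc.pow 2).intervalIntegrable 0 1
  -- integration by parts : ∫ g^4/f^2 = 3 ∫ g^2 h / f
  have key : (∫ x in (0:ℝ)..1, (g x) ^ 4 / (f x) ^ 2)
      = 3 * ∫ x in (0:ℝ)..1, (g x) ^ 2 * h x / f x := by
    have hzero : (∫ x in (0:ℝ)..1,
        (3 * (g x) ^ 2 * h x / f x - (g x) ^ 4 / (f x) ^ 2)) = 0 := by
      rw [intervalIntegral.integral_eq_sub_of_hasDerivAt (fun x _ => hF x)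
        ((hcont1.sub hcont2).intervalIntegrable 0 1)]
      have e1 : g 1 = g 0 := by simpa using hgper 0
      have e2 : f 1 = f 0 := by simpa using hper 0
      rw [e1, e2, sub_self]
    rw [intervalIntegral.integral_sub hint1 hint2] at hzero
    have : (∫ x in (0:ℝ)..1, 3 * (g x) ^ 2 * h x / f x)
        = 3 * ∫ x in (0:ℝ)..1, (g x) ^ 2 * h x / f x := by
      rw [← intervalIntegral.integral_const_mul]
      congr 1
      funext x
      ring
    linarith [this ▸ hzero]
  -- pointwise AM-GM : 3 g²h/f ≤ (1/2) g⁴/f² + (9/2) h²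
  have hpt : ∀ x ∈ Set.Icc (0:ℝ) 1, 3 * ((g x) ^ 2 * h x / f x)
      ≤ (1/2) * ((g x) ^ 4 / (f x) ^ 2) + (9/2) * (h x) ^ 2 := by
    intro x _
    have ha : (g x) ^ 2 * h x / f x = ((g x) ^ 2 / f x) * h x := by ring
    have hb : (g x) ^ 4 / (f x) ^ 2 = ((g x) ^ 2 / f x) ^ 2 := by
      rw [div_pow]; ring_nf
    rw [ha, hb]
    nlinarith [sq_nonneg ((g x) ^ 2 / f x - 3 * h x)]
  -- conclude A ≤ 9 C
  have hA : (∫ x in (0:ℝ)..1, (g x) ^ 4 / (f x) ^ 2)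
      ≤ 9 * ∫ x in (0:ℝ)..1, (h x) ^ 2 := by
    have hmono : (∫ x in (0:ℝ)..1, 3 * ((g x) ^ 2 * h x / f x))
        ≤ ∫ x in (0:ℝ)..1, ((1/2) * ((g x) ^ 4 / (f x) ^ 2) + (9/2) * (h x) ^ 2) := by
      apply intervalIntegral.integral_mono_on zero_le_one
      · exact (continuous_const.mul (((hgc.pow 2).mul hhc).div hfc hfne)).intervalIntegrable 0 1
      · exact ((continuous_const.mul hcont2).add (continuous_const.mul (hhc.pow 2))).intervalIntegrable 0 1
      · exact hpt
    rw [intervalIntegral.integral_const_mul] at hmono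
    rw [intervalIntegral.integral_add (f := fun x => (1/2:ℝ) * ((g x) ^ 4 / (f x) ^ 2))
      (g := fun x => (9/2:ℝ) * (h x) ^ 2) ((continuous_const.mul hcont2).intervalIntegrable 0 1)
      ((continuous_const.mul (hhc.pow 2)).intervalIntegrable 0 1),
      intervalIntegral.integral_const_mul, intervalIntegral.integral_const_mul] at hmono
    linarith [key ▸ hmono]
  -- rewrite LHS
  have hlhs : (∫ x in (0:ℝ)..1, (deriv (fun y => Real.sqrt (f y)) x) ^ 4)
      = (1/16) * ∫ x in (0:ℝ)..1, (g x) ^ 4 / (f x) ^ 2 := by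
    rw [← intervalIntegral.integral_const_mul]
    apply intervalIntegral.integral_congr
    intro x _
    have hd : deriv (fun y => Real.sqrt (f y)) x = g x / (2 * Real.sqrt (f x)) :=
      deriv_sqrt (hfd x) (hfne x)
    have hs : Real.sqrt (f x) ^ 2 = f x := Real.sq_sqrt (hpos x).le
    show deriv (fun y => Real.sqrt (f y)) x ^ 4 = 1 / 16 * ((g x) ^ 4 / (f x) ^ 2)
    rw [hd, div_pow]
    rw [show (2 * Real.sqrt (f x)) ^ 4 = 16 * (Real.sqrt (f x) ^ 2) ^ 2 by ring, hs]
    field_simp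
  have hC : 0 ≤ ∫ x in (0:ℝ)..1, (h x) ^ 2 :=
    intervalIntegral.integral_nonneg zero_le_one fun x _ => sq_nonneg _
  rw [hlhs]
  linarith [hA]
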